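/- Let a, b, c ∈ ℂ with Re c > Re b > 0, let p > 0 be real and let z < 1 be real. Then the Euler-integral hypergeometric function satisfies F(a,b;c;z) = p^{−b} · F₁(b; c−a, a; c; (p−1)/p, (z+p−1)/p), where F₁ is given by its Euler integral (well defined since Re c > Re b > 0 and both arguments (p−1)/p and (z+p−1)/p are real numbers less than 1). -/

import Mathlib

open MeasureTheory Complex Set

noncomputable section

/-- Pochhammer symbol `(a)_k = a (a+1) ⋯ (a+k-1)`. -/
def poch (a : ℂ) (k : ℕ) : ℂ := ∏ i ∈ Finset.range k, (a + i)

/-- Euler-integral Gauss hypergeometric function `F(a,b;c;w)` for real `w < 1`. -/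
def eulerF (a b c : ℂ) (w : ℝ) : ℂ :=
  Complex.Gamma c / (Complex.Gamma b * Complex.Gamma (c - b)) *
    ∫ t in (0:ℝ)..1, (t : ℂ) ^ (b - 1) * ((1 - t : ℝ) : ℂ) ^ (c - b - 1) *
      ((1 - w * t : ℝ) : ℂ) ^ (-a)

/-- Appell's first hypergeometric function `F₁(α;β,β';γ;x,w)` by its Euler integral. -/
def appellF1 (α β β' γ : ℂ) (x w : ℝ) : ℂ :=
  Complex.Gamma γ / (Complex.Gamma α * Complex.Gamma (γ - α)) *
    ∫ t in (0:ℝ)..1, (t : ℂ) ^ (α - 1) * ((1 - t : ℝ) : ℂ) ^ (γ - α - 1) *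
      ((1 - x * t : ℝ) : ℂ) ^ (-β) * ((1 - w * t : ℝ) : ℂ) ^ (-β')

/-- `cpow` of a positive real as an exponential. -/
lemma cpowE {x : ℝ} (hx : 0 < x) (w : ℂ) :
    ((x : ℝ) : ℂ) ^ w = Complex.exp (w * ((Real.log x : ℝ) : ℂ)) := by
  rw [Complex.cpow_def_of_ne_zero (by exact_mod_cast hx.ne'),
    ← Complex.ofReal_log hx.le, mul_comm]

/-- a positive real as an exponential. -/
lemma ofRealE {x : ℝ} (hx : 0 < x) :
    ((x : ℝ) : ℂ) = Complex.exp ((Real.log x : ℝ) : ℂ) := by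
  rw [← Complex.ofReal_exp, Real.exp_log hx]

theorem Gauss_as_AppellF1_phi_p
    (a b c : ℂ) (hb : 0 < b.re) (hbc : b.re < c.re)
    (p : ℝ) (hp : 0 < p) (z : ℝ) (hz : z < 1) :
    eulerF a b c z =
      ((p : ℝ) : ℂ) ^ (-b) *
      appellF1 b (c - a) a c ((p - 1) / p) ((z + p - 1) / p) := by
  set φ : ℝ → ℝ := fun t => t / (p + (1 - p) * t) with hφ
  set g : ℝ → ℂ := fun u =>
    (u : ℂ) ^ (b - 1) * ((1 - u : ℝ) : ℂ) ^ (c - b - 1) * ((1 - z * u : ℝ) : ℂ) ^ (-a) with hg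
  set h : ℝ → ℂ := fun t =>
    (t : ℂ) ^ (b - 1) * ((1 - t : ℝ) : ℂ) ^ (c - b - 1) *
      ((1 - (p - 1) / p * t : ℝ) : ℂ) ^ (-(c - a)) *
      ((1 - (z + p - 1) / p * t : ℝ) : ℂ) ^ (-a) with hh
  have hDpos : ∀ t ∈ Ioo (0:ℝ) 1, 0 < p + (1 - p) * t := by
    intro t ht
    nlinarith [ht.1, ht.2]
  -- image of (0,1) under φ is (0,1)
  have himg : φ '' Ioo 0 1 = Ioo 0 1 := by
    ext u
    constructor
    · rintro ⟨t, ht, rfl⟩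
      have hD := hDpos t ht
      constructor
      · exact div_pos ht.1 hD
      · rw [div_lt_one hD]
        nlinarith [ht.1, ht.2]
    · intro hu
      have hE : 0 < 1 - (1 - p) * u := by nlinarith [hu.1, hu.2]
      refine ⟨p * u / (1 - (1 - p) * u), ⟨?_, ?_⟩, ?_⟩
      · exact div_pos (mul_pos hp hu.1) hE
      · rw [div_lt_one hE]
        nlinarith [hu.2]
      · show p * u / (1 - (1 - p) * u) / (p + (1 - p) * (p * u / (1 - (1 - p) * u))) = u
        have hden : p + (1 - p) * (p * u / (1 - (1 - p) * u)) = p / (1 - (1 - p) * u) := by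
          field_simp
          ring
        rw [hden]
        field_simp
        rw [mul_div_assoc, div_self (by linarith [hE] : (0:ℝ) < 1 - u * (1 - p)).ne', mul_one]
  -- injectivity
  have hinj : InjOn φ (Ioo 0 1) := by
    intro s hs t ht hst
    have hDs := (hDpos s hs).ne'
    have hDt := (hDpos t ht).ne'
    have : s * (p + (1 - p) * t) = t * (p + (1 - p) * s) := by
      simp only [hφ] at hst
      rw [div_eq_div_iff hDs hDt] at hst
      linarith [hst]
    have hpt : p * s = p * t := by nlinarith [this]
    exact mul_left_cancel₀ hp.ne' hpt
  -- derivative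
  have hderiv : ∀ t ∈ Ioo (0:ℝ) 1,
      HasDerivWithinAt φ (p / (p + (1 - p) * t) ^ 2) (Ioo 0 1) t := by
    intro t ht
    have hD := hDpos t ht
    have h1 : HasDerivAt (fun t : ℝ => t) 1 t := hasDerivAt_id t
    have h2 : HasDerivAt (fun t : ℝ => p + (1 - p) * t) (1 - p) t := by
      simpa using ((hasDerivAt_id t).const_mul (1 - p)).const_add p
    have := h1.div h2 hD.ne'
    have heq : (1 * (p + (1 - p) * t) - t * (1 - p)) / (p + (1 - p) * t) ^ 2
        = p / (p + (1 - p) * t) ^ 2 := by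
      congr 1
      ring
    rw [heq] at this
    exact this.hasDerivWithinAt
  -- pointwise identity
  have hpt : ∀ t ∈ Ioo (0:ℝ) 1,
      |p / (p + (1 - p) * t) ^ 2| • g (φ t) = ((p : ℝ) : ℂ) ^ (-b) * h t := by
    intro t ht
    have hD := hDpos t ht
    have hE : 0 < p + (1 - p) * t - z * t := by nlinarith [ht.1, ht.2]
    set D : ℝ := p + (1 - p) * t with hDdef
    have h0 : |p / D ^ 2| = p / D ^ 2 := abs_of_pos (by positivity)
    have h1 : 1 - t / D = p * (1 - t) / D := by
      field_simp
      ring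
    have h2 : 1 - z * (t / D) = (D - z * t) / D := by
      field_simp
    have h3 : 1 - (p - 1) / p * t = D / p := by
      field_simp
      ring
    have h4 : 1 - (z + p - 1) / p * t = (D - z * t) / p := by
      field_simp
      ring
    show (|p / D ^ 2| : ℝ) •
        (((t / D : ℝ) : ℂ) ^ (b - 1) * ((1 - t / D : ℝ) : ℂ) ^ (c - b - 1) *
          ((1 - z * (t / D) : ℝ) : ℂ) ^ (-a))
      = ((p : ℝ) : ℂ) ^ (-b) *
        ((t : ℂ) ^ (b - 1) * ((1 - t : ℝ) : ℂ) ^ (c - b - 1) *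
          ((1 - (p - 1) / p * t : ℝ) : ℂ) ^ (-(c - a)) *
          ((1 - (z + p - 1) / p * t : ℝ) : ℂ) ^ (-a))
    rw [h0, h1, h2, h3, h4, Complex.real_smul]
    have e0 := ofRealE (show 0 < p / D ^ 2 by positivity)
    have e1 := cpowE (show 0 < t / D from div_pos ht.1 hD) (b - 1)
    have e2 := cpowE (show 0 < p * (1 - t) / D from
      div_pos (mul_pos hp (by linarith [ht.2])) hD) (c - b - 1)
    have e3 := cpowE (show 0 < (D - z * t) / D from div_pos hE hD) (-a)
    have e4 := cpowE hp (-b)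
    have e5 := cpowE (show 0 < t from ht.1) (b - 1)
    have e6 := cpowE (show 0 < 1 - t by linarith [ht.2]) (c - b - 1)
    have e7 := cpowE (show 0 < D / p from div_pos hD hp) (-(c - a))
    have e8 := cpowE (show 0 < (D - z * t) / p from div_pos hE hp) (-a)
    rw [e0, e1, e2, e3, e4, e5, e6, e7, e8]
    rw [← Complex.exp_add, ← Complex.exp_add, ← Complex.exp_add,
      ← Complex.exp_add, ← Complex.exp_add, ← Complex.exp_add, ← Complex.exp_add]
    congr 1
    have l0 : Real.log (p / D ^ 2) = Real.log p - 2 * Real.log D := by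
      rw [Real.log_div hp.ne' (pow_ne_zero 2 hD.ne'), Real.log_pow]
      push_cast
      ring
    have l1 : Real.log (t / D) = Real.log t - Real.log D :=
      Real.log_div ht.1.ne' hD.ne'
    have l2 : Real.log (p * (1 - t) / D)
        = Real.log p + Real.log (1 - t) - Real.log D := by
      rw [Real.log_div (mul_pos hp (by linarith [ht.2] : (0:ℝ) < 1 - t)).ne' hD.ne',
        Real.log_mul hp.ne' (by linarith [ht.2] : (1:ℝ) - t ≠ 0)]
    have l3 : Real.log ((D - z * t) / D) = Real.log (D - z * t) - Real.log D :=
      Real.log_div hE.ne' hD.ne'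
    have l4 : Real.log (D / p) = Real.log D - Real.log p :=
      Real.log_div hD.ne' hp.ne'
    have l5 : Real.log ((D - z * t) / p) = Real.log (D - z * t) - Real.log p :=
      Real.log_div hE.ne' hp.ne'
    rw [l0, l1, l2, l3, l4, l5]
    push_cast
    ring
  -- the change of variables
  have key : ∫ u in Ioo (0:ℝ) 1, g u
      = ((p : ℝ) : ℂ) ^ (-b) * ∫ t in Ioo (0:ℝ) 1, h t := by
    conv_lhs => rw [← himg]
    rw [integral_image_eq_integral_abs_deriv_smul measurableSet_Ioo hderiv hinj g,
      setIntegral_congr_fun measurableSet_Ioo hpt, integral_const_mul]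
  have hIg : (∫ u in (0:ℝ)..1, g u) = ∫ u in Ioo (0:ℝ) 1, g u := by
    rw [intervalIntegral.integral_of_le zero_le_one,
      MeasureTheory.integral_Ioc_eq_integral_Ioo]
  have hIh : (∫ t in (0:ℝ)..1, h t) = ∫ t in Ioo (0:ℝ) 1, h t := by
    rw [intervalIntegral.integral_of_le zero_le_one,
      MeasureTheory.integral_Ioc_eq_integral_Ioo]
  show Complex.Gamma c / (Complex.Gamma b * Complex.Gamma (c - b)) *
      (∫ u in (0:ℝ)..1, g u)
    = ((p : ℝ) : ℂ) ^ (-b) *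
      (Complex.Gamma c / (Complex.Gamma b * Complex.Gamma (c - b)) *
        ∫ t in (0:ℝ)..1, h t)
  rw [hIg, hIh, key]
  ring

end
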